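/- Let n be an integer with 3 ≤ n ≤ dim T − 1, and let A : ⋀^{n−1} T* → T be a linear map such that for all α, β ∈ ⋀^{n−1} T* one has ι_{A α} β + ι_{A β} α = 0 in ⋀^{n−2} T* (i.e. the graph {(A α, α) : α ∈ ⋀^{n−1} T*} is an isotropic subspace of E^{n−1} = T ⊕ ⋀^{n−1} T*). Then A = 0. -/

import Mathlib

open Module

section Aux

variable {T : Type} [AddCommGroup T] [Module ℝ T] {N m : ℕ}

/-- The "basis `k`-form" associated to a tuple `σ` of indices: the determinant of the
matrix of coordinates at the indices `σ i`. -/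
noncomputable def Eform (e : Basis (Fin N) ℝ T) (σ : Fin (m+2) → Fin N) : T [⋀^Fin (m+2)]→ₗ[ℝ] ℝ :=
  Matrix.detRowAlternating.compLinearMap (LinearMap.pi fun i => e.coord (σ i))

lemma Eform_apply (e : Basis (Fin N) ℝ T) (σ : Fin (m+2) → Fin N) (v : Fin (m+2) → T) :
    Eform e σ v = Matrix.det (Matrix.of fun l i => e.coord (σ i) (v l)) := rfl

lemma alt_sum_apply {ι : Type*} (s : Finset ι) (f : ι → (T [⋀^Fin (m+1)]→ₗ[ℝ] ℝ))
    (v : Fin (m+1) → T) : (∑ i ∈ s, f i) v = ∑ i ∈ s, f i v :=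
  map_sum (AddMonoidHom.mk' (fun g : T [⋀^Fin (m+1)]→ₗ[ℝ] ℝ => g v)
    (fun a b => AlternatingMap.add_apply a b v)) f s

lemma coord_basis (e : Basis (Fin N) ℝ T) (a b : Fin N) :
    e.coord a (e b) = if b = a then 1 else 0 := by
  simp [Basis.coord_apply, Finsupp.single_apply]

/-- Contracting `Eform e σ` with any vector and evaluating on basis vectors one of which is
outside the range of `σ` gives zero. -/
lemma term2 (e : Basis (Fin N) ℝ T) (σ : Fin (m+2) → Fin N) (Z : T)
    (w : Fin (m+1) → Fin N) (hw : w 0 ∉ Set.range σ) :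
    (Eform e σ).curryLeft Z (fun l => e (w l)) = 0 := by
  rw [AlternatingMap.curryLeft_apply_apply, Eform_apply]
  apply Matrix.det_eq_zero_of_row_eq_zero 1
  intro i
  have h1 : (Matrix.vecCons Z (fun l => e (w l)) : Fin (m+2) → T) 1 = e (w 0) := rfl
  simp only [Matrix.of_apply, h1, coord_basis]
  rw [if_neg]
  intro h
  exact hw ⟨i, h.symm⟩

/-- Contracting `Eform e σ` with `Y` and evaluating on `e (σ 1), ..., e (σ (m+1))`
gives the `σ 0` coordinate of `Y`. -/
lemma term1 (e : Basis (Fin N) ℝ T) (σ : Fin (m+2) → Fin N)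
    (hσ : Function.Injective σ) (Y : T) :
    (Eform e σ).curryLeft Y (fun l => e (σ l.succ)) = e.repr Y (σ 0) := by
  conv_lhs => rw [← e.sum_repr Y]
  rw [map_sum, alt_sum_apply]
  rw [Finset.sum_eq_single (σ 0)]
  · rw [map_smul, AlternatingMap.smul_apply, AlternatingMap.curryLeft_apply_apply]
    have hv : (Matrix.vecCons (e (σ 0)) (fun l => e (σ l.succ)) : Fin (m+2) → T)
        = fun l => e (σ l) := by
      funext l
      refine Fin.cases ?_ (fun i => ?_) l
      · rfl
      · rfl
    rw [hv, Eform_apply]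
    have hM : (Matrix.of fun l i => e.coord (σ i) (e (σ l))) = (1 : Matrix (Fin (m+2)) (Fin (m+2)) ℝ) := by
      ext l i
      rw [Matrix.of_apply, coord_basis, Matrix.one_apply]
      by_cases h : l = i
      · simp [h]
      · rw [if_neg (fun hh => h (hσ hh)), if_neg h]
    rw [hM, Matrix.det_one, smul_eq_mul, mul_one]
  · intro j _ hj
    rw [map_smul, AlternatingMap.smul_apply, smul_eq_mul]
    have : (Eform e σ).curryLeft (e j) (fun l => e (σ l.succ)) = 0 := by
      by_cases hjr : j ∈ Set.range σ
      · obtain ⟨i₁, hi₁⟩ := hjr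
        have hi₁0 : i₁ ≠ 0 := fun h => hj (by rw [← hi₁, h])
        obtain ⟨l₁, hl₁⟩ := Fin.exists_succ_eq.mpr hi₁0
        rw [AlternatingMap.curryLeft_apply_apply]
        apply AlternatingMap.map_eq_zero_of_eq _ _ (i := (0 : Fin (m+2))) (j := i₁)
        · have h0 : (Matrix.vecCons (e j) (fun l => e (σ l.succ)) : Fin (m+2) → T) 0 = e j := rfl
          have hs : (Matrix.vecCons (e j) (fun l => e (σ l.succ)) : Fin (m+2) → T) i₁ = e (σ i₁) := by
            rw [← hl₁]; rfl
          rw [h0, hs, hi₁]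
        · exact fun h => hi₁0 h.symm
      · rw [AlternatingMap.curryLeft_apply_apply, Eform_apply]
        apply Matrix.det_eq_zero_of_row_eq_zero 0
        intro i
        have h0 : (Matrix.vecCons (e j) (fun l => e (σ l.succ)) : Fin (m+2) → T) 0 = e j := rfl
        simp only [Matrix.of_apply, h0, coord_basis]
        rw [if_neg (fun h => hjr ⟨i, h.symm⟩)]
    rw [this, mul_zero]
  · intro h
    exact absurd (Finset.mem_univ _) h

end Aux

/-- STATEMENT 9, with `n = m + 3` (so the hypothesis `3 ≤ n` is automatic):
if `A : ⋀^{n-1} T* → T` is linear and its graph in `E^{n-1} = T ⊕ ⋀^{n-1} T*` is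
isotropic, i.e. `ι_{Aα} β + ι_{Aβ} α = 0` for all `α β`, and `3 ≤ n ≤ dim T - 1`,
then `A = 0`. -/
theorem stmt9 {T : Type} [AddCommGroup T] [Module ℝ T] [FiniteDimensional ℝ T]
    (m : ℕ) (hn : m + 3 ≤ finrank ℝ T - 1)
    (A : (T [⋀^Fin (m+2)]→ₗ[ℝ] ℝ) →ₗ[ℝ] T)
    (hiso : ∀ α β : T [⋀^Fin (m+2)]→ₗ[ℝ] ℝ,
      β.curryLeft (A α) + α.curryLeft (A β) = 0) :
    A = 0 := by
  set N := finrank ℝ T with hNdef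
  have hN : m + 4 ≤ N := by omega
  haveI : NeZero N := ⟨by omega⟩
  let e : Basis (Fin N) ℝ T := finBasis ℝ T
  -- Step 1: A vanishes on all basis forms.
  have step1 : ∀ σ : Fin (m+2) → Fin N, Function.Injective σ → A (Eform e σ) = 0 := by
    intro σ hσ
    rw [Basis.ext_elem_iff e]
    intro j
    rw [map_zero, Finsupp.coe_zero, Pi.zero_apply]
    -- choose i₀ such that the sub-tuple g avoids j
    have hchoice : ∃ i₀ : Fin (m+2), ∀ l : Fin m, σ (i₀.succAbove l.castSucc) ≠ j := by
      by_cases hj : ∃ i, σ i = j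
      · obtain ⟨i₀, hi₀⟩ := hj
        refine ⟨i₀, fun l h => ?_⟩
        exact Fin.succAbove_ne i₀ l.castSucc (hσ (h.trans hi₀.symm))
      · exact ⟨0, fun l h => hj ⟨_, h⟩⟩
    obtain ⟨i₀, hi₀⟩ := hchoice
    set g : Fin m → Fin N := fun l => σ (i₀.succAbove l.castSucc) with hg
    -- choose x outside range σ and different from j
    have hx : ∃ x : Fin N, x ∉ insert j (Finset.image σ Finset.univ) := by
      by_contra h
      push_neg at h
      have huniv : (insert j (Finset.image σ Finset.univ) : Finset (Fin N)) = Finset.univ :=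
        Finset.eq_univ_iff_forall.mpr h
      have hcard : (insert j (Finset.image σ Finset.univ) : Finset (Fin N)).card ≤ m + 3 := by
        calc (insert j (Finset.image σ Finset.univ) : Finset (Fin N)).card
            ≤ (Finset.image σ Finset.univ).card + 1 := Finset.card_insert_le _ _
          _ ≤ (Finset.univ : Finset (Fin (m+2))).card + 1 := by
              have := Finset.card_image_le (f := σ) (s := Finset.univ)
              omega
          _ = m + 3 := by simp
      rw [huniv] at hcard
      simp [Finset.card_univ] at hcard
      omega
    obtain ⟨x, hx⟩ := hx
    have hxj : x ≠ j := fun h => hx (by simp [h])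
    have hxσ : x ∉ Set.range σ := by
      rintro ⟨i, rfl⟩
      exact hx (Finset.mem_insert_of_mem (Finset.mem_image_of_mem σ (Finset.mem_univ i)))
    have hjg : j ∉ Set.range g := by
      rintro ⟨l, hl⟩
      exact hi₀ l hl
    have hxg : x ∉ Set.range g := by
      rintro ⟨l, hl⟩
      exact hxσ ⟨_, hl⟩
    set σ' : Fin (m+2) → Fin N := Fin.cons j (Fin.cons x g) with hσ'def
    have hσ' : Function.Injective σ' := by
      rw [hσ'def, Fin.cons_injective_iff]
      constructor
      · rw [Fin.range_cons]
        intro h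
        rcases h with h | h
        · exact hxj h.symm
        · exact hjg h
      · rw [Fin.cons_injective_iff]
        refine ⟨hxg, ?_⟩
        intro a b hab
        exact Fin.castSucc_injective _ (Fin.succAbove_right_injective (hσ hab))
    have h1 := hiso (Eform e σ) (Eform e σ')
    have h2 := congrArg (fun F => F (fun l : Fin (m+1) => e (σ' l.succ))) h1
    simp only [AlternatingMap.add_apply, AlternatingMap.zero_apply] at h2
    rw [term1 e σ' hσ' (A (Eform e σ))] at h2
    have ht2 : (Eform e σ).curryLeft (A (Eform e σ')) (fun l => e (σ' l.succ)) = 0 := by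
      apply term2
      show σ' ((0 : Fin (m+1)).succ) ∉ Set.range σ
      have : σ' ((0 : Fin (m+1)).succ) = x := by
        rw [hσ'def, Fin.cons_succ, Fin.cons_zero]
      rw [this]
      exact hxσ
    rw [ht2, add_zero] at h2
    have hσ'0 : σ' 0 = j := by rw [hσ'def, Fin.cons_zero]
    rw [hσ'0] at h2
    exact h2
  -- Step 2: A vanishes on everything.
  apply LinearMap.ext
  intro α
  rw [LinearMap.zero_apply]
  rw [Basis.ext_elem_iff e]
  intro j
  rw [map_zero, Finsupp.coe_zero, Pi.zero_apply]
  set σ : Fin (m+2) → Fin N := fun l => j + Fin.castLE (by omega : m + 2 ≤ N) l with hσdef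
  have hσ : Function.Injective σ := by
    intro a b hab
    rw [hσdef] at hab
    have := add_left_cancel hab
    exact Fin.castLE_injective _ this
  have hσ0 : σ 0 = j := by
    rw [hσdef]
    simp [Fin.ext_iff]
  have h1 := hiso α (Eform e σ)
  have h2 := congrArg (fun F => F (fun l : Fin (m+1) => e (σ l.succ))) h1
  simp only [AlternatingMap.add_apply, AlternatingMap.zero_apply] at h2
  rw [term1 e σ hσ (A α), step1 σ hσ, map_zero, AlternatingMap.zero_apply, add_zero, hσ0] at h2
  exact h2
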